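/- Let n ≥ 1, let G be a group, and let w be a G-weighting of the hypercube graph Q_n with commutative 2-faces. Then the weight of a walk depends only on its endpoints: any two walks in Q_n with the same initial vertex and the same final vertex have equal weight. -/

import Mathlib

open SimpleGraph

/-- The hypercube graph `Q_n` on vertices `Fin n → Bool`, two vertices being
adjacent iff they differ in exactly one coordinate (Hamming distance 1). -/
def Qgraph (n : ℕ) : SimpleGraph (Fin n → Bool) where
  Adj x y := hammingDist x y = 1
  symm := by
    constructor
    intro x y (h : hammingDist x y = 1)
    show hammingDist y x = 1
    rwa [hammingDist_comm]
  loopless := by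
    constructor
    intro x (h : hammingDist x x = 1)
    simp [hammingDist_self] at h

/-- A `G`-weighting of `Q_n`: an assignment of elements of `G` to ordered pairs of
adjacent vertices such that reversing a pair inverts the weight. -/
def IsWeighting {n : ℕ} {G : Type*} [Group G]
    (w : (Fin n → Bool) → (Fin n → Bool) → G) : Prop :=
  ∀ x y, (Qgraph n).Adj x y → w y x = (w x y)⁻¹

/-- The weight of a walk: the ordered product of the weights of its steps. -/
def walkWeight {n : ℕ} {G : Type*} [Group G]
    (w : (Fin n → Bool) → (Fin n → Bool) → G) {u v : Fin n → Bool}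
    (p : (Qgraph n).Walk u v) : G :=
  (p.darts.map fun d => w d.toProd.1 d.toProd.2).prod

/-- `w` has commutative 2-faces. -/
def CommutativeTwoFaces {n : ℕ} {G : Type*} [Group G]
    (w : (Fin n → Bool) → (Fin n → Bool) → G) : Prop :=
  ∀ (x : Fin n → Bool) (i j : Fin n), i ≠ j → x i = false → x j = false →
    w x (Function.update x i true) *
      w (Function.update x i true)
        (Function.update (Function.update x i true) j true) =
    w x (Function.update x j true) *
      w (Function.update x j true)
        (Function.update (Function.update x j true) i true)

/-- The vertex of `Q_n` corresponding to a set of coordinates. -/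
def vertOf {n : ℕ} (s : Finset (Fin n)) : Fin n → Bool := fun j => decide (j ∈ s)

lemma vertOf_insert {n : ℕ} (s : Finset (Fin n)) (i : Fin n) :
    vertOf (insert i s) = Function.update (vertOf s) i true := by
  funext j
  by_cases h : j = i <;> simp [vertOf, Function.update, h]

lemma vertOf_apply_eq_false {n : ℕ} {s : Finset (Fin n)} {i : Fin n} (h : i ∉ s) :
    vertOf s i = false := by simp [vertOf, h]

/-- Potential function: weight of the canonical walk from the all-false vertex. -/
def phi {n : ℕ} {G : Type*} [Group G]
    (w : (Fin n → Bool) → (Fin n → Bool) → G) (s : Finset (Fin n)) : G :=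
  if h : s.Nonempty then
    phi w (s.erase (s.max' h)) * w (vertOf (s.erase (s.max' h))) (vertOf s)
  else 1
termination_by s.card
decreasing_by exact Finset.card_erase_lt_of_mem (s.max'_mem h)

lemma phi_insert {n : ℕ} {G : Type*} [Group G]
    (w : (Fin n → Bool) → (Fin n → Bool) → G) (hcomm : CommutativeTwoFaces w)
    (s : Finset (Fin n)) (i : Fin n) (hi : i ∉ s) :
    phi w (insert i s) = phi w s * w (vertOf s) (vertOf (insert i s)) := by
  induction s using Finset.strongInduction with
  | _ s ih =>
    rcases s.eq_empty_or_nonempty with rfl | hne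
    · rw [phi]
      have hne' : ({i} : Finset (Fin n)).Nonempty := ⟨i, by simp⟩
      simp only [insert_empty_eq]
      rw [dif_pos hne']
      have : ({i} : Finset (Fin n)).max' hne' = i := by simp
      rw [this]
      simp [phi]
    · set m := s.max' hne with hm
      have hmem : m ∈ s := s.max'_mem hne
      have him : i ≠ m := fun h => hi (h ▸ hmem)
      have hins : (insert i s).Nonempty := ⟨i, Finset.mem_insert_self i s⟩
      rcases lt_or_gt_of_ne him with hlt | hgt
      · -- i < m : max of insert i s is m
        have hmax : (insert i s).max' hins = m := by
          apply le_antisymm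
          · apply Finset.max'_le
            intro y hy
            rcases Finset.mem_insert.mp hy with rfl | hy
            · exact le_of_lt hlt
            · exact Finset.le_max' s y hy
          · exact Finset.le_max' _ m (Finset.mem_insert_of_mem hmem)
        have herase : (insert i s).erase m = insert i (s.erase m) := by
          rw [Finset.erase_insert_of_ne him]
        have hphis : phi w (insert i s)
            = phi w (insert i (s.erase m)) *
              w (vertOf (insert i (s.erase m))) (vertOf (insert i s)) := by
          rw [phi, dif_pos hins, hmax, herase]
        set t := s.erase m with ht
        have hit : i ∉ t := fun h => hi (Finset.mem_of_mem_erase h)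
        have hmt : m ∉ t := Finset.notMem_erase m s
        have htsub : t ⊂ s := Finset.erase_ssubset hmem
        have hih : phi w (insert i t) = phi w t * w (vertOf t) (vertOf (insert i t)) :=
          ih t htsub hit
        have hst : s = insert m t := (Finset.insert_erase hmem).symm
        have hphis2 : phi w s = phi w t * w (vertOf t) (vertOf s) := by
          rw [phi, dif_pos hne, ← hm, ← ht]
        -- commutative faces at vertOf t with coordinates i, m
        have hcm := hcomm (vertOf t) i m him (vertOf_apply_eq_false hit)
          (vertOf_apply_eq_false hmt)
        have e1 : Function.update (vertOf t) i true = vertOf (insert i t) :=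
          (vertOf_insert t i).symm
        have e2 : Function.update (vertOf t) m true = vertOf s := by
          rw [← vertOf_insert, ← hst]
        have e3 : Function.update (vertOf (insert i t)) m true = vertOf (insert i s) := by
          rw [← vertOf_insert]
          congr 1
          rw [hst, Finset.insert_comm]
        have e4 : Function.update (vertOf s) i true = vertOf (insert i s) :=
          (vertOf_insert s i).symm
        rw [e1, e2, e3, e4] at hcm
        rw [hphis, hih, mul_assoc, hcm, hphis2, mul_assoc]
      · -- i > m : max of insert i s is i
        have hmax : (insert i s).max' hins = i := by
          apply le_antisymm
          · apply Finset.max'_le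
            intro y hy
            rcases Finset.mem_insert.mp hy with rfl | hy
            · exact le_refl _
            · exact le_of_lt (lt_of_le_of_lt (Finset.le_max' s y hy) hgt)
          · exact Finset.le_max' _ i (Finset.mem_insert_self i s)
        rw [phi, dif_pos hins, hmax, Finset.erase_insert hi]

/-- Set of true coordinates of a vertex. -/
def sOf {n : ℕ} (x : Fin n → Bool) : Finset (Fin n) :=
  Finset.univ.filter (fun j => x j = true)

lemma vertOf_sOf {n : ℕ} (x : Fin n → Bool) : vertOf (sOf x) = x := by
  funext j
  simp only [vertOf, sOf, Finset.mem_filter, Finset.mem_univ, true_and]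
  cases h : x j <;> simp [h]

lemma w_eq_phi {n : ℕ} {G : Type*} [Group G]
    {w : (Fin n → Bool) → (Fin n → Bool) → G}
    (hw : IsWeighting w) (hcomm : CommutativeTwoFaces w)
    (x y : Fin n → Bool) (hadj : (Qgraph n).Adj x y) :
    w x y = (phi w (sOf x))⁻¹ * phi w (sOf y) := by
  -- extract the coordinate where x and y differ
  have key : ∀ a b : Fin n → Bool, (Qgraph n).Adj a b →
      ∃ i : Fin n, a i ≠ b i ∧ ∀ j : Fin n, j ≠ i → a j = b j := by
    intro a b hab
    have h1 : (Finset.filter (fun j => a j ≠ b j) Finset.univ).card = 1 := hab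
    obtain ⟨i, hi⟩ := Finset.card_eq_one.mp h1
    refine ⟨i, ?_, ?_⟩
    · have : i ∈ Finset.filter (fun j => a j ≠ b j) Finset.univ := by rw [hi]; simp
      simpa using this
    · intro j hj
      by_contra hja
      have : j ∈ Finset.filter (fun j => a j ≠ b j) Finset.univ := by simpa using hja
      rw [hi] at this
      exact hj (by simpa using this)
  -- case where x i = false
  have aux : ∀ a b : Fin n → Bool, ∀ i : Fin n, a i = false → b i = true →
      (∀ j : Fin n, j ≠ i → a j = b j) →
      w a b = (phi w (sOf a))⁻¹ * phi w (sOf b) := by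
    intro a b i ha hb hjs
    have hisa : i ∉ sOf a := by simp [sOf, ha]
    have hsb : sOf b = insert i (sOf a) := by
      ext j
      by_cases hji : j = i
      · subst hji; simp [sOf, hb]
      · simp [sOf, ← hjs j hji, hji]
    have := phi_insert w hcomm (sOf a) i hisa
    rw [← hsb, vertOf_sOf, vertOf_sOf] at this
    rw [this]
    group
  obtain ⟨i, hne, hjs⟩ := key x y hadj
  cases hx : x i with
  | false =>
    have hy : y i = true := by
      cases hyv : y i
      · exact absurd (hx.trans hyv.symm) hne
      · rfl
    exact aux x y i hx hy hjs
  | true =>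
    have hy : y i = false := by
      cases hyv : y i
      · rfl
      · exact absurd (hx.trans hyv.symm) hne
    have h2 := aux y x i hy hx (fun j hj => (hjs j hj).symm)
    have h3 : w x y = (w y x)⁻¹ := by rw [hw x y hadj, inv_inv]
    rw [h3, h2]
    group

lemma walkWeight_eq_phi {n : ℕ} {G : Type*} [Group G]
    {w : (Fin n → Bool) → (Fin n → Bool) → G}
    (hw : IsWeighting w) (hcomm : CommutativeTwoFaces w)
    {u v : Fin n → Bool} (p : (Qgraph n).Walk u v) :
    walkWeight w p = (phi w (sOf u))⁻¹ * phi w (sOf v) := by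
  induction p with
  | nil => simp [walkWeight]
  | cons h p ih =>
    rename_i a b c
    have : walkWeight w (SimpleGraph.Walk.cons h p) = w a b * walkWeight w p := by
      simp [walkWeight, SimpleGraph.Walk.darts]
    rw [this, ih, w_eq_phi hw hcomm a b h]
    group

theorem walkWeight_eq_of_commutativeTwoFaces
    (n : ℕ) (hn : 1 ≤ n) {G : Type*} [Group G]
    (w : (Fin n → Bool) → (Fin n → Bool) → G)
    (hw : IsWeighting w) (hcomm : CommutativeTwoFaces w)
    (u v : Fin n → Bool) (p q : (Qgraph n).Walk u v) :
    walkWeight w p = walkWeight w q := by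
  rw [walkWeight_eq_phi hw hcomm p, walkWeight_eq_phi hw hcomm q]
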